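/- For every integer R ≥ 1, the spectral norm of the R×R Hilbert matrix T_R satisfies ‖T_R‖ < π. -/

import Mathlib

open Real intervalIntegral

/-- The `R × R` Hilbert matrix `T_R`, with entries `1/(m - n)` for `m ≠ n`
and `0` on the diagonal. -/
noncomputable def Tmat (R : ℕ) : Matrix (Fin R) (Fin R) ℝ :=
  Matrix.of fun m n => if m = n then 0 else 1 / ((m : ℝ) - (n : ℝ))

/-- The spectral norm of a real matrix: the operator norm induced by the
Euclidean norm. -/
noncomputable def specNorm {R : ℕ} (M : Matrix (Fin R) (Fin R) ℝ) : ℝ :=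
  ‖Matrix.toEuclideanCLM (𝕜 := ℝ) M‖

lemma sin_k2pi (k : ℤ) : Real.sin (k * (2*π)) = 0 := by
  simpa using Real.sin_add_int_mul_two_pi 0 k

lemma cos_k2pi (k : ℤ) : Real.cos (k * (2*π)) = 1 := by
  simpa using Real.cos_add_int_mul_two_pi 0 k

lemma integral_cos_int (k : ℤ) (hk : k ≠ 0) :
    ∫ θ in (0:ℝ)..(2*π), Real.cos (k*θ) = 0 := by
  have hk' : (k:ℝ) ≠ 0 := Int.cast_ne_zero.mpr hk
  have h : ∀ θ : ℝ, HasDerivAt (fun t : ℝ => Real.sin (k*t) / k) (Real.cos (k*θ)) θ := by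
    intro θ
    have h1 : HasDerivAt (fun t : ℝ => (k:ℝ)*t) (k:ℝ) θ := by
      simpa using (hasDerivAt_id θ).const_mul (k:ℝ)
    have h2 := ((Real.hasDerivAt_sin ((k:ℝ)*θ)).comp θ h1).div_const (k:ℝ)
    simpa [mul_comm, mul_div_assoc, mul_div_cancel_left₀ _ hk'] using h2
  rw [integral_eq_sub_of_hasDerivAt (fun θ _ => h θ)]
  · simp [sin_k2pi]
  · exact (Real.continuous_cos.comp (continuous_const.mul continuous_id)).intervalIntegrable _ _

lemma integral_kernel_int (k : ℤ) (hk : k ≠ 0) :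
    ∫ θ in (0:ℝ)..(2*π), (π - θ) * Real.sin (k*θ) = 2*π/k := by
  have hk' : (k:ℝ) ≠ 0 := Int.cast_ne_zero.mpr hk
  have h : ∀ θ : ℝ, HasDerivAt
      (fun t : ℝ => (π - t) * (-Real.cos (k*t)) / k - Real.sin (k*t) / k^2)
      ((π - θ) * Real.sin (k*θ)) θ := by
    intro θ
    have h1 : HasDerivAt (fun t : ℝ => (k:ℝ)*t) (k:ℝ) θ := by
      simpa using (hasDerivAt_id θ).const_mul (k:ℝ)
    have hcos : HasDerivAt (fun t : ℝ => Real.cos (k*t)) (-Real.sin (k*θ) * k) θ :=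
      (Real.hasDerivAt_cos ((k:ℝ)*θ)).comp θ h1
    have hsin : HasDerivAt (fun t : ℝ => Real.sin (k*t)) (Real.cos (k*θ) * k) θ :=
      (Real.hasDerivAt_sin ((k:ℝ)*θ)).comp θ h1
    have hlin : HasDerivAt (fun t : ℝ => π - t) (-1) θ := by
      simpa using (hasDerivAt_id θ).const_sub π
    have hmul := (hlin.mul hcos.neg).div_const (k:ℝ)
    have := hmul.sub (hsin.div_const ((k:ℝ)^2))
    refine this.congr_deriv ?_
    simp only [Pi.neg_apply]
    field_simp
    ring
  rw [integral_eq_sub_of_hasDerivAt (fun θ _ => h θ)]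
  · simp [sin_k2pi, cos_k2pi]
    field_simp
    norm_num
  · exact ((continuous_const.sub continuous_id).mul
      (Real.continuous_sin.comp (continuous_const.mul continuous_id))).intervalIntegrable _ _

lemma form_eq (R : ℕ) (x y : Fin R → ℝ) :
    ∑ m, ∑ n, y m * x n * (if m = n then 0 else 1 / ((m:ℝ) - (n:ℝ)))
      = (1/(2*π)) * ∫ θ in (0:ℝ)..(2*π),
          (π - θ) * ((∑ m, y m * Real.sin (m*θ)) * (∑ n, x n * Real.cos (n*θ))
            - (∑ m, y m * Real.cos (m*θ)) * (∑ n, x n * Real.sin (n*θ))) := by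
  have hπ : (π:ℝ) ≠ 0 := Real.pi_ne_zero
  have hint : ∀ θ:ℝ, (π - θ) * ((∑ m, y m * Real.sin (m*θ)) * (∑ n, x n * Real.cos (n*θ))
            - (∑ m, y m * Real.cos (m*θ)) * (∑ n, x n * Real.sin (n*θ)))
      = ∑ m, ∑ n, (π - θ) * (y m * x n * Real.sin (((m:ℝ)-(n:ℝ))*θ)) := by
    intro θ
    rw [Finset.sum_mul_sum, Finset.sum_mul_sum]
    rw [← Finset.sum_sub_distrib, Finset.mul_sum]
    refine Finset.sum_congr rfl fun m _ => ?_
    rw [← Finset.sum_sub_distrib, Finset.mul_sum]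
    refine Finset.sum_congr rfl fun n _ => ?_
    have hs : Real.sin (((m:ℝ)-(n:ℝ))*θ) = Real.sin ((m:ℝ)*θ) * Real.cos ((n:ℝ)*θ)
        - Real.cos ((m:ℝ)*θ) * Real.sin ((n:ℝ)*θ) := by rw [sub_mul, Real.sin_sub]
    rw [hs]; ring
  have hcongr : (∫ θ in (0:ℝ)..(2*π),
          (π - θ) * ((∑ m, y m * Real.sin (m*θ)) * (∑ n, x n * Real.cos (n*θ))
            - (∑ m, y m * Real.cos (m*θ)) * (∑ n, x n * Real.sin (n*θ))))
      = ∫ θ in (0:ℝ)..(2*π), ∑ m, ∑ n, (π - θ) * (y m * x n * Real.sin (((m:ℝ)-(n:ℝ))*θ)) := by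
    refine intervalIntegral.integral_congr fun θ _ => hint θ
  rw [hcongr]
  have hcont : ∀ (m n : Fin R), Continuous fun θ:ℝ => (π - θ) * (y m * x n * Real.sin (((m:ℝ)-(n:ℝ))*θ)) := by
    intro m n
    exact (continuous_const.sub continuous_id).mul
      (continuous_const.mul (Real.continuous_sin.comp (continuous_const.mul continuous_id)))
  rw [intervalIntegral.integral_finset_sum]
  swap
  · intro m _
    exact (continuous_finset_sum _ fun n _ => hcont m n).intervalIntegrable _ _
  rw [Finset.mul_sum]
  refine Finset.sum_congr rfl fun m _ => ?_
  rw [intervalIntegral.integral_finset_sum (fun n _ => (hcont m n).intervalIntegrable _ _)]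
  rw [Finset.mul_sum]
  refine Finset.sum_congr rfl fun n _ => ?_
  have : (∫ θ in (0:ℝ)..(2*π), (π - θ) * (y m * x n * Real.sin (((m:ℝ)-(n:ℝ))*θ)))
      = y m * x n * ∫ θ in (0:ℝ)..(2*π), (π - θ) * Real.sin (((m:ℝ)-(n:ℝ))*θ) := by
    rw [← intervalIntegral.integral_const_mul]
    refine intervalIntegral.integral_congr fun θ _ => by ring
  rw [this]
  by_cases h : m = n
  · subst h
    simp
  · have hk : ((m:ℤ) - (n:ℤ)) ≠ 0 := by
      simpa [sub_eq_zero, Fin.val_injective.eq_iff] using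
        fun hh : (m:ℤ) = (n:ℤ) => h (Fin.val_injective (by exact_mod_cast hh))
    have hcast : (((m:ℤ) - (n:ℤ) : ℤ) : ℝ) = (m:ℝ) - (n:ℝ) := by push_cast; ring
    rw [if_neg h, ← hcast, integral_kernel_int _ hk]
    have hkR : ((((m:ℤ) - (n:ℤ)) : ℤ) : ℝ) ≠ 0 := Int.cast_ne_zero.mpr hk
    field_simp

lemma orth (R : ℕ) (y : Fin R → ℝ) :
    ∫ θ in (0:ℝ)..(2*π), ((∑ m, y m * Real.cos (m*θ))^2 + (∑ m, y m * Real.sin (m*θ))^2)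
      = 2*π * ∑ m, y m ^ 2 := by
  have hint : ∀ θ:ℝ, ((∑ m, y m * Real.cos (m*θ))^2 + (∑ m, y m * Real.sin (m*θ))^2)
      = ∑ m, ∑ n, (y m * y n) * Real.cos (((m:ℝ)-(n:ℝ))*θ) := by
    intro θ
    rw [sq, sq, Finset.sum_mul_sum, Finset.sum_mul_sum, ← Finset.sum_add_distrib]
    refine Finset.sum_congr rfl fun m _ => ?_
    rw [← Finset.sum_add_distrib]
    refine Finset.sum_congr rfl fun n _ => ?_
    have hc : Real.cos (((m:ℝ)-(n:ℝ))*θ) = Real.cos ((m:ℝ)*θ) * Real.cos ((n:ℝ)*θ)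
        + Real.sin ((m:ℝ)*θ) * Real.sin ((n:ℝ)*θ) := by rw [sub_mul, Real.cos_sub]
    rw [hc]; ring
  rw [intervalIntegral.integral_congr (fun θ _ => hint θ)]
  have hcont : ∀ (m n : Fin R), Continuous fun θ:ℝ => (y m * y n) * Real.cos (((m:ℝ)-(n:ℝ))*θ) :=
    fun m n => continuous_const.mul (Real.continuous_cos.comp (continuous_const.mul continuous_id))
  rw [intervalIntegral.integral_finset_sum
    (fun m _ => (continuous_finset_sum _ fun n _ => hcont m n).intervalIntegrable _ _)]
  have : ∀ m : Fin R, (∫ θ in (0:ℝ)..(2*π), ∑ n, (y m * y n) * Real.cos (((m:ℝ)-(n:ℝ))*θ))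
      = 2*π * y m ^2 := by
    intro m
    rw [intervalIntegral.integral_finset_sum (fun n _ => (hcont m n).intervalIntegrable _ _)]
    have hterm : ∀ n : Fin R, (∫ θ in (0:ℝ)..(2*π), (y m * y n) * Real.cos (((m:ℝ)-(n:ℝ))*θ))
        = if m = n then 2*π*y m^2 else 0 := by
      intro n
      rw [intervalIntegral.integral_const_mul]
      by_cases h : m = n
      · subst h; simp [Real.cos_zero, sq]; ring
      · have hk : ((m:ℤ) - (n:ℤ)) ≠ 0 := by
          intro hh
          exact h (Fin.val_injective (by exact_mod_cast sub_eq_zero.mp hh))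
        have hcast : (((m:ℤ) - (n:ℤ) : ℤ) : ℝ) = (m:ℝ) - (n:ℝ) := by push_cast; ring
        rw [if_neg h, ← hcast, integral_cos_int _ hk, mul_zero]
    simp only [hterm]
    simp
  simp only [this]
  rw [Finset.mul_sum]

lemma exists_pt (R : ℕ) (y : Fin R → ℝ) (hy : y ≠ 0) :
    ∃ θ ∈ Set.Ioo (0:ℝ) (2*π),
      0 < (∑ m, y m * Real.cos (m*θ))^2 + (∑ m, y m * Real.sin (m*θ))^2 := by
  classical
  set p : Polynomial ℂ := ∑ m : Fin R, Polynomial.C (y m : ℂ) * Polynomial.X ^ (m:ℕ) with hp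
  have hp0 : p ≠ 0 := by
    obtain ⟨m₀, hm₀⟩ := Function.ne_iff.mp hy
    intro h
    apply hm₀
    have hc : p.coeff (m₀:ℕ) = (y m₀ : ℂ) := by
      rw [hp, Polynomial.finset_sum_coeff]
      rw [Finset.sum_eq_single m₀]
      · simp
      · intro n _ hn
        rw [Polynomial.coeff_C_mul, Polynomial.coeff_X_pow, if_neg, mul_zero]
        exact fun hh => hn (Fin.val_injective hh.symm)
      · simp
    rw [h] at hc
    simpa using hc.symm
  -- evaluation
  have heval : ∀ θ : ℝ, p.eval (Complex.exp (θ * Complex.I))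
      = Complex.I * (∑ m, y m * Real.sin (m*θ)) + (∑ m, y m * Real.cos (m*θ)) := by
    intro θ
    rw [hp, Polynomial.eval_finset_sum]
    have hterm : ∀ m : Fin R,
        (Polynomial.C (y m:ℂ) * Polynomial.X ^ (m:ℕ)).eval (Complex.exp (θ * Complex.I))
        = (y m : ℂ) * (↑(Real.cos ((m:ℕ)*θ)) + ↑(Real.sin ((m:ℕ)*θ)) * Complex.I) := by
      intro m
      rw [Polynomial.eval_mul, Polynomial.eval_C, Polynomial.eval_pow, Polynomial.eval_X,
        ← Complex.exp_nat_mul]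
      congr 1
      rw [show ((m:ℕ):ℂ) * (↑θ * Complex.I) = ((((m:ℕ):ℝ)*θ : ℝ) : ℂ) * Complex.I by
        push_cast; ring]
      rw [Complex.exp_mul_I, ← Complex.ofReal_cos, ← Complex.ofReal_sin]
    simp only [hterm]
    push_cast
    rw [Finset.mul_sum, ← Finset.sum_add_distrib]
    exact Finset.sum_congr rfl fun m _ => by ring
  -- a θ where eval ≠ 0
  have : ∃ θ ∈ Set.Ioo (0:ℝ) (2*π), p.eval (Complex.exp (θ * Complex.I)) ≠ 0 := by
    by_contra hcon
    push_neg at hcon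
    have hfin : {z : ℂ | p.IsRoot z}.Finite := Polynomial.finite_setOf_isRoot hp0
    have hinj : Set.InjOn (fun θ : ℝ => Complex.exp (θ * Complex.I)) (Set.Ioo 0 (2*π)) := by
      intro a ha b hb hab
      have := Complex.exp_eq_exp_iff_exists_int.mp hab
      obtain ⟨n, hn⟩ := this
      have him : (a:ℝ) = b + n * (2*π) := by
        have := congrArg Complex.im hn
        simpa [Complex.add_im, Complex.mul_im, Complex.mul_re, Real.pi_ne_zero] using this
      have hn0 : n = 0 := by
        rcases ha with ⟨ha1, ha2⟩; rcases hb with ⟨hb1, hb2⟩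
        have hpi := Real.pi_pos
        by_contra hne
        rcases lt_or_gt_of_ne hne with h | h
        · have : (n:ℝ) ≤ -1 := by exact_mod_cast (by omega : n ≤ -1)
          nlinarith
        · have : (1:ℝ) ≤ n := by exact_mod_cast h
          nlinarith
      rw [hn0] at him; simpa using him
    have himg : (fun θ : ℝ => Complex.exp (θ * Complex.I)) '' (Set.Ioo 0 (2*π))
        ⊆ {z : ℂ | p.IsRoot z} := by
      rintro _ ⟨θ, hθ, rfl⟩
      exact hcon θ hθ
    have hfin2 : (Set.Ioo (0:ℝ) (2*π)).Finite :=
      Set.Finite.of_finite_image (hfin.subset himg) hinj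
    have hpi := Real.pi_pos
    exact (Set.Ioo_infinite (by linarith : (0:ℝ) < 2*π)) hfin2
  obtain ⟨θ, hθ, hne⟩ := this
  refine ⟨θ, hθ, ?_⟩
  rw [heval θ] at hne
  have hpos : (0:ℝ) < Complex.normSq (Complex.I * (∑ m, y m * Real.sin (m*θ)) + (∑ m, y m * Real.cos (m*θ))) :=
    Complex.normSq_pos.mpr hne
  have hre : (Complex.I * ((∑ m, y m * Real.sin (m*θ)):ℝ) + ((∑ m, y m * Real.cos (m*θ)):ℝ)).re
      = ∑ m, y m * Real.cos (m*θ) := by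
    simp only [Complex.add_re, Complex.mul_re, Complex.I_re, Complex.I_im,
      Complex.ofReal_re, Complex.ofReal_im]
    ring
  have him : (Complex.I * ((∑ m, y m * Real.sin (m*θ)):ℝ) + ((∑ m, y m * Real.cos (m*θ)):ℝ)).im
      = ∑ m, y m * Real.sin (m*θ) := by
    simp only [Complex.add_im, Complex.mul_im, Complex.I_re, Complex.I_im,
      Complex.ofReal_re, Complex.ofReal_im]
    ring
  rw [Complex.normSq_apply, hre, him] at hpos
  nlinarith [hpos]

lemma form_lt_pi (R : ℕ) (x y : Fin R → ℝ) (hx : ∑ n, x n ^ 2 ≤ 1) (hy : ∑ m, y m ^ 2 ≤ 1)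
    (hy0 : y ≠ 0) :
    ∑ m, ∑ n, y m * x n * (if m = n then 0 else 1 / ((m:ℝ) - (n:ℝ))) < π := by
  have hπ := Real.pi_pos
  rw [form_eq]
  set A : ℝ → ℝ := fun θ => ∑ m, y m * Real.cos (m*θ) with hA
  set B : ℝ → ℝ := fun θ => ∑ m, y m * Real.sin (m*θ) with hB
  set C : ℝ → ℝ := fun θ => ∑ n, x n * Real.cos (n*θ) with hC
  set D : ℝ → ℝ := fun θ => ∑ n, x n * Real.sin (n*θ) with hD
  have hcontA : Continuous A := continuous_finset_sum _ fun m _ =>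
    continuous_const.mul (Real.continuous_cos.comp (continuous_const.mul continuous_id))
  have hcontB : Continuous B := continuous_finset_sum _ fun m _ =>
    continuous_const.mul (Real.continuous_sin.comp (continuous_const.mul continuous_id))
  have hcontC : Continuous C := continuous_finset_sum _ fun m _ =>
    continuous_const.mul (Real.continuous_cos.comp (continuous_const.mul continuous_id))
  have hcontD : Continuous D := continuous_finset_sum _ fun m _ =>
    continuous_const.mul (Real.continuous_sin.comp (continuous_const.mul continuous_id))
  have hcontf : Continuous fun θ => (π - θ) * (B θ * C θ - A θ * D θ) :=
    (continuous_const.sub continuous_id).mul ((hcontB.mul hcontC).sub (hcontA.mul hcontD))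
  have hcontg : Continuous fun θ => π * ((A θ^2 + B θ^2) + (C θ^2 + D θ^2)) / 2 :=
    (continuous_const.mul (((hcontA.pow 2).add (hcontB.pow 2)).add
      ((hcontC.pow 2).add (hcontD.pow 2)))).div_const 2
  -- strict integral inequality
  have key : (∫ θ in (0:ℝ)..(2*π), (π - θ) * (B θ * C θ - A θ * D θ))
      < ∫ θ in (0:ℝ)..(2*π), π * ((A θ^2 + B θ^2) + (C θ^2 + D θ^2)) / 2 := by
    obtain ⟨θ₀, hθ₀, hpt⟩ := exists_pt R y hy0
    refine intervalIntegral.integral_lt_integral_of_continuousOn_of_le_of_exists_lt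
      (by linarith) hcontf.continuousOn hcontg.continuousOn ?_ ⟨θ₀, Set.mem_Icc_of_Ioo hθ₀, ?_⟩
    · intro θ hθ
      rcases hθ with ⟨h1, h2⟩
      have e1 : 0 ≤ θ * ((B θ + C θ)^2 + (A θ - D θ)^2) :=
        mul_nonneg h1.le (by positivity)
      have e2 : 0 ≤ (2*π - θ) * ((B θ - C θ)^2 + (A θ + D θ)^2) :=
        mul_nonneg (by linarith) (by positivity)
      nlinarith [e1, e2]
    · rcases hθ₀ with ⟨h1, h2⟩
      have hpt' : 0 < A θ₀ ^ 2 + B θ₀ ^ 2 := by simpa [hA, hB] using hpt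
      have hsum : 0 < ((B θ₀ + C θ₀)^2 + (A θ₀ - D θ₀)^2)
          + ((B θ₀ - C θ₀)^2 + (A θ₀ + D θ₀)^2) := by nlinarith [hpt', sq_nonneg (C θ₀), sq_nonneg (D θ₀)]
      rcases lt_or_ge 0 ((B θ₀ + C θ₀)^2 + (A θ₀ - D θ₀)^2) with h | h
      · have e1 : 0 < θ₀ * ((B θ₀ + C θ₀)^2 + (A θ₀ - D θ₀)^2) := mul_pos h1 h
        have e2 : 0 ≤ (2*π - θ₀) * ((B θ₀ - C θ₀)^2 + (A θ₀ + D θ₀)^2) :=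
          mul_nonneg (by linarith) (by positivity)
        nlinarith [e1, e2]
      · have h' : 0 < ((B θ₀ - C θ₀)^2 + (A θ₀ + D θ₀)^2) := by
          nlinarith [sq_nonneg (B θ₀ + C θ₀), sq_nonneg (A θ₀ - D θ₀), hpt']
        have e1 : 0 ≤ θ₀ * ((B θ₀ + C θ₀)^2 + (A θ₀ - D θ₀)^2) :=
          mul_nonneg h1.le (by positivity)
        have e2 : 0 < (2*π - θ₀) * ((B θ₀ - C θ₀)^2 + (A θ₀ + D θ₀)^2) :=
          mul_pos (by linarith) h'
        nlinarith [e1, e2]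
  have hg : (∫ θ in (0:ℝ)..(2*π), π * ((A θ^2 + B θ^2) + (C θ^2 + D θ^2)) / 2) ≤ 2*π^2 := by
    have hsplit : (∫ θ in (0:ℝ)..(2*π), π * ((A θ^2 + B θ^2) + (C θ^2 + D θ^2)) / 2)
        = π/2 * ((∫ θ in (0:ℝ)..(2*π), (A θ^2 + B θ^2))
            + ∫ θ in (0:ℝ)..(2*π), (C θ^2 + D θ^2)) := by
      rw [← intervalIntegral.integral_add (f := fun θ => A θ^2 + B θ^2) (g := fun θ => C θ^2 + D θ^2)
        (((hcontA.pow 2).add (hcontB.pow 2) : Continuous fun θ => A θ^2 + B θ^2).intervalIntegrable _ _)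
        (((hcontC.pow 2).add (hcontD.pow 2) : Continuous fun θ => C θ^2 + D θ^2).intervalIntegrable _ _),
        ← intervalIntegral.integral_const_mul]
      exact intervalIntegral.integral_congr fun θ _ => by ring
    rw [hsplit, hA, hB, hC, hD]
    rw [orth R y, orth R x]
    nlinarith [hx, hy, Real.pi_pos]
  calc (1/(2*π)) * ∫ θ in (0:ℝ)..(2*π), (π - θ) * (B θ * C θ - A θ * D θ)
      < (1/(2*π)) * (2*π^2) := by
        apply mul_lt_mul_of_pos_left _ (by positivity)
        exact lt_of_lt_of_le key hg
    _ = π := by field_simp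

lemma clm_apply_coord {R : ℕ} (M : Matrix (Fin R) (Fin R) ℝ) (v : EuclideanSpace ℝ (Fin R))
    (m : Fin R) : (Matrix.toEuclideanCLM (𝕜 := ℝ) M) v m = M.mulVec v m := by
  have h := Matrix.ofLp_toEuclideanCLM (𝕜 := ℝ) M v
  exact congrFun h m

/-- Hilbert's inequality: `‖T_R‖ < π` for every `R ≥ 1`. -/
theorem specNorm_Tmat_lt_pi (R : ℕ) (hR : 1 ≤ R) :
    specNorm (Tmat R) < Real.pi := by
  classical
  have hπ := Real.pi_pos
  set L := Matrix.toEuclideanCLM (𝕜 := ℝ) (Tmat R) with hL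
  have hnontriv : Nontrivial (EuclideanSpace ℝ (Fin R)) := by
    refine ⟨⟨EuclideanSpace.single ⟨0, hR⟩ (1:ℝ), 0, ?_⟩⟩
    intro h
    have := congrFun (congrArg (fun (v : EuclideanSpace ℝ (Fin R)) (i : Fin R) => v i) h) ⟨0, hR⟩
    simpa using this
  have hsph : (Metric.sphere (0 : EuclideanSpace ℝ (Fin R)) 1).Nonempty :=
    NormedSpace.sphere_nonempty.mpr zero_le_one
  obtain ⟨x₀, hx₀s, hmax⟩ := (isCompact_sphere (0 : EuclideanSpace ℝ (Fin R)) 1).exists_isMaxOn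
    hsph ((continuous_norm.comp L.continuous).continuousOn)
  have hx₀ : ‖x₀‖ = 1 := by simpa using hx₀s
  have hnorm : ‖L‖ = ‖L x₀‖ := by
    apply le_antisymm
    · refine L.opNorm_le_bound (norm_nonneg _) fun v => ?_
      rcases eq_or_ne v 0 with rfl | hv
      · simp
      · have hvn : ‖v‖ ≠ 0 := norm_ne_zero_iff.mpr hv
        have hu : (‖v‖⁻¹ • v) ∈ Metric.sphere (0 : EuclideanSpace ℝ (Fin R)) 1 := by
          simp [norm_smul, abs_of_nonneg (inv_nonneg.mpr (norm_nonneg v)),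
            inv_mul_cancel₀ hvn]
        have h2 : ‖L (‖v‖⁻¹ • v)‖ ≤ ‖L x₀‖ := hmax hu
        rw [map_smul, norm_smul, Real.norm_eq_abs,
          abs_of_nonneg (inv_nonneg.mpr (norm_nonneg v))] at h2
        calc ‖L v‖ = ‖v‖ * (‖v‖⁻¹ * ‖L v‖) := by field_simp
        _ ≤ ‖v‖ * ‖L x₀‖ := mul_le_mul_of_nonneg_left h2 (norm_nonneg v)
        _ = ‖L x₀‖ * ‖v‖ := by ring
    · calc ‖L x₀‖ ≤ ‖L‖ * ‖x₀‖ := L.le_opNorm x₀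
      _ = ‖L‖ := by rw [hx₀, mul_one]
  rcases eq_or_ne (L x₀) 0 with h0 | h0
  · have : specNorm (Tmat R) = 0 := by rw [specNorm, ← hL, hnorm, h0, norm_zero]
    rw [this]; exact hπ
  · set y : EuclideanSpace ℝ (Fin R) := ‖L x₀‖⁻¹ • (L x₀) with hy
    have hLx : ‖L x₀‖ ≠ 0 := norm_ne_zero_iff.mpr h0
    have hy1 : ‖y‖ = 1 := by
      rw [hy, norm_smul, Real.norm_eq_abs, abs_of_nonneg (inv_nonneg.mpr (norm_nonneg _)),
        inv_mul_cancel₀ hLx]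
    have hinner : (inner ℝ y (L x₀) : ℝ) = ‖L x₀‖ := by
      rw [hy, real_inner_smul_left, real_inner_self_eq_norm_sq, sq]
      field_simp
    -- coordinates
    have hsum : (inner ℝ y (L x₀) : ℝ)
        = ∑ m, ∑ n, y m * x₀ n * (if m = n then 0 else 1 / ((m:ℝ) - (n:ℝ))) := by
      rw [PiLp.inner_apply]
      refine Finset.sum_congr rfl fun m _ => ?_
      rw [clm_apply_coord]
      simp only [RCLike.inner_apply, starRingEnd_apply, star_trivial]
      rw [Matrix.mulVec, dotProduct, Finset.sum_mul]
      refine Finset.sum_congr rfl fun n _ => ?_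
      simp only [Tmat, Matrix.of_apply]
      ring
    have hxsq : ∑ n, x₀ n ^ 2 ≤ 1 := by
      have := EuclideanSpace.norm_eq x₀
      rw [hx₀] at this
      have h2 : ∑ n, ‖x₀ n‖^2 = 1 := Real.sqrt_eq_one.mp this.symm
      calc ∑ n, x₀ n ^2 = ∑ n, ‖x₀ n‖^2 := by
            refine Finset.sum_congr rfl fun n _ => ?_
            rw [Real.norm_eq_abs, sq_abs]
      _ ≤ 1 := le_of_eq h2
    have hysq : ∑ m, y m ^ 2 ≤ 1 := by
      have := EuclideanSpace.norm_eq y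
      rw [hy1] at this
      have h2 : ∑ n, ‖y n‖^2 = 1 := Real.sqrt_eq_one.mp this.symm
      calc ∑ n, y n ^2 = ∑ n, ‖y n‖^2 := by
            refine Finset.sum_congr rfl fun n _ => ?_
            rw [Real.norm_eq_abs, sq_abs]
      _ ≤ 1 := le_of_eq h2
    have hy0 : (fun m => y m) ≠ 0 := by
      intro h
      apply hLx
      have : y = 0 := by
        ext m
        exact congrFun h m
      rw [this] at hy1
      simp at hy1
    have hmain := form_lt_pi R (fun n => x₀ n) (fun m => y m) hxsq hysq hy0
    rw [specNorm, ← hL, hnorm, ← hinner, hsum]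
    exact hmain
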